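/- arXiv:math/0607251 — 4 statements merged into one kernel-verified Lean document; each statement's English description precedes it below -/
import Mathlib

section
/- Fix an integer e>1 and a charge (s_0,s_1)∈ℕ². Let γ=(a,b,c) and γ_1=(a_1,b_1,c_1) be two nodes of a bipartition λ=(λ^(0),λ^(1)) having the same residue mod e with respect to the charge (s_0,s_1). Set γ'=(a,b,1−c) and γ_1'=(a_1,b_1,1−c_1), which are nodes of the swapped bipartition (λ^(1),λ^(0)) having the same residue mod e with respect to the charge (s_1,s_0+e). Then γ >_{(s_0,s_1)} γ_1 if and only if γ' >_{(s_1,s_0+e)} γ_1'. -/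
open Finset

/-- A node `(a, b, c)`: row index `a ≥ 1`, column index `b ≥ 1`, component `c ∈ {0,1}`. -/
abbrev Node : Type := ℕ × ℕ × Fin 2

namespace UglovPaper

/-- Row index of a node. -/
def nrow (γ : Node) : ℕ := γ.1

/-- Column index of a node. -/
def ncol (γ : Node) : ℕ := γ.2.1

/-- Component of a node. -/
def ncomp (γ : Node) : Fin 2 := γ.2.2

/-- A finite set of nodes is the Young diagram of a bipartition iff all indices are `≥ 1`
and the set is closed under moving left in a row and up in a column (in each component). -/
def IsDiagram (D : Finset Node) : Prop :=
  (∀ γ ∈ D, 1 ≤ nrow γ ∧ 1 ≤ ncol γ) ∧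
  (∀ γ ∈ D, ∀ b' : ℕ, 1 ≤ b' → b' ≤ ncol γ → (nrow γ, b', ncomp γ) ∈ D) ∧
  (∀ γ ∈ D, 2 ≤ nrow γ → (nrow γ - 1, ncol γ, ncomp γ) ∈ D)

/-- `part D c a` is the `a`-th part `λ^(c)_a` of the bipartition with diagram `D`. -/
def part (D : Finset Node) (c : Fin 2) (a : ℕ) : ℕ :=
  (D.filter (fun γ => nrow γ = a ∧ ncomp γ = c)).card

/-- The content `b - a + s_c` of a node `(a,b,c)` for the charge `s`. -/
def cont (s : Fin 2 → ℤ) (γ : Node) : ℤ := (ncol γ : ℤ) - (nrow γ : ℤ) + s (ncomp γ)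

/-- The residue mod `e` of a node for the charge `s`. -/
def res (e : ℕ) (s : Fin 2 → ℤ) (γ : Node) : ZMod e := ((cont s γ : ℤ) : ZMod e)

/-- The order `γ <_{(s₀,s₁)} γ'` on nodes. -/
def chargeLT (s : Fin 2 → ℤ) (γ γ' : Node) : Prop :=
  cont s γ < cont s γ' ∨ (cont s γ = cont s γ' ∧ ncomp γ' < ncomp γ)

/-- The positive asymptotic order `γ <_{(v₀,v₁)₊} γ'`. -/
def posLT (γ γ' : Node) : Prop :=
  ncomp γ' < ncomp γ ∨ (ncomp γ = ncomp γ' ∧ nrow γ' < nrow γ)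

/-- The negative asymptotic order `γ <_{(v₀,v₁)₋} γ'`. -/
def negLT (γ γ' : Node) : Prop :=
  ncomp γ < ncomp γ' ∨ (ncomp γ = ncomp γ' ∧ nrow γ' < nrow γ)

/-- `γ` is a removable node of the diagram `D`. -/
def Removable (D : Finset Node) (γ : Node) : Prop := γ ∈ D ∧ IsDiagram (D.erase γ)

/-- `γ` is an addable node of the diagram `D`. -/
def Addable (D : Finset Node) (γ : Node) : Prop := γ ∉ D ∧ IsDiagram (insert γ D)

/-- `γ` is a normal `i`-node of `D` with respect to the order `lt` and the residue map `r`: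
it is a removable `i`-node, and for every `i`-node `η` above it, the number of addable
`i`-nodes in the interval `(γ, η]` does not exceed the number of removable `i`-nodes there.
This is equivalent to surviving the `RA`-deletion process. -/
def NormalNode {α : Type*} (D : Finset Node) (lt : Node → Node → Prop)
    (r : Node → α) (i : α) (γ : Node) : Prop :=
  Removable D γ ∧ r γ = i ∧
  ∀ η : Node, r η = i → lt γ η →
    {x : Node | Addable D x ∧ r x = i ∧ lt γ x ∧ (lt x η ∨ x = η)}.ncard ≤
    {x : Node | Removable D x ∧ r x = i ∧ lt γ x ∧ (lt x η ∨ x = η)}.ncard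

/-- `γ` is the good `i`-node of `D`: the minimal normal `i`-node for the order `lt`. -/
def GoodNode {α : Type*} (D : Finset Node) (lt : Node → Node → Prop)
    (r : Node → α) (i : α) (γ : Node) : Prop :=
  NormalNode D lt r i γ ∧ ∀ δ : Node, NormalNode D lt r i δ → δ = γ ∨ lt γ δ

/-- The recursively defined class of bipartitions labelling the crystal:
the empty bipartition has rank `0`, and a bipartition of rank `n + 1` belongs iff
removing some good `i`-node yields a member of rank `n`. -/
inductive CrystalSet {α : Type*} (lt : Node → Node → Prop) (r : Node → α) :
    ℕ → Finset Node → Prop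
  | empty : CrystalSet lt r 0 ∅
  | step {n : ℕ} {D : Finset Node} {γ : Node} (i : α) :
      IsDiagram D → GoodNode D lt r i γ →
      CrystalSet lt r n (D.erase γ) → CrystalSet lt r (n + 1) D

/-- The set `Φ_{e,n}^{(s₀,s₁)}` of Uglov bipartitions. -/
def UglovSet (e : ℕ) (s : Fin 2 → ℤ) : ℕ → Finset Node → Prop :=
  CrystalSet (chargeLT s) (res e s)

/-- The set `Φ_{e,n}^{(v₀,v₁)₊}` of positive Kleshchev bipartitions. -/
def KleshchevPos (e : ℕ) (v : Fin 2 → ℤ) : ℕ → Finset Node → Prop :=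
  CrystalSet posLT (res e v)

/-- The set `Φ_{e,n}^{(v₀,v₁)₋}` of negative Kleshchev bipartitions. -/
def KleshchevNeg (e : ℕ) (v : Fin 2 → ℤ) : ℕ → Finset Node → Prop :=
  CrystalSet negLT (res e v)

/-- Swapping the two components of a bipartition: `(λ⁽⁰⁾,λ⁽¹⁾) ↦ (λ⁽¹⁾,λ⁽⁰⁾)`. -/
def swapDiagram (D : Finset Node) : Finset Node :=
  D.image (fun γ => (γ.1, γ.2.1, γ.2.2 + 1))

/-! ### Symbols -/

/-- `beta s m D c j` is the `j`-th entry `β^(c)_j = λ^(c)_j − j + s_c + m` of the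
`s`-symbol of `D`, for `1 ≤ j ≤ m + s_c`. -/
def beta (s : Fin 2 → ℕ) (m : ℕ) (D : Finset Node) (c : Fin 2) (j : ℕ) : ℕ :=
  part D c j + (m + s c) - j

/-- The multiset of entries of the row `β^(c)` of the `s`-symbol. -/
def rowM (s : Fin 2 → ℕ) (m : ℕ) (D : Finset Node) (c : Fin 2) : Multiset ℕ :=
  (Finset.Icc 1 (m + s c)).val.map (beta s m D c)

/-- The list of the values `θ(β⁽⁰⁾_{m+s₀}), θ(β⁽⁰⁾_{m+s₀-1}), …` chosen greedily:
at step `k` (handling `p = m + s₀ - k`) we choose the largest entry of the top row not yet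
used that is `≤ β⁽⁰⁾_p`. -/
def thetaList (s : Fin 2 → ℕ) (m : ℕ) (D : Finset Node) : ℕ → List ℕ
  | 0 => []
  | k + 1 =>
      let prev := thetaList s m D k
      prev ++ [WithBot.unbotD 0 ((((Finset.Icc 1 (m + s 1)).image (beta s m D 1)).filter
          (fun y => y ∉ prev ∧ y ≤ beta s m D 0 (m + s 0 - k))).max)]

/-- The greedy injection `θ`, as a function of the index `p ∈ {1, …, m + s₀}`:
`theta s m D p = θ(β⁽⁰⁾_p)`. -/
def theta (s : Fin 2 → ℕ) (m : ℕ) (D : Finset Node) (p : ℕ) : ℕ :=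
  (thetaList s m D (m + s 0)).getD (m + s 0 - p) 0

/-- The bottom row of the symbol obtained by exchanging the entries of every pair:
it is the multiset of the values `θ(β⁽⁰⁾_p)`. -/
def bottomRowNew (s : Fin 2 → ℕ) (m : ℕ) (D : Finset Node) : Multiset ℕ :=
  (Finset.Icc 1 (m + s 0)).val.map (theta s m D)

/-- The top row of the symbol obtained by exchanging the entries of every pair:
all entries of both rows that did not go to the new bottom row. -/
def topRowNew (s : Fin 2 → ℕ) (m : ℕ) (D : Finset Node) : Multiset ℕ :=
  (rowM s m D 0 + rowM s m D 1) - bottomRowNew s m D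

/-- The rows of the symbol of `Υ(λ)`. -/
def newRow (s : Fin 2 → ℕ) (m : ℕ) (D : Finset Node) (c : Fin 2) : Multiset ℕ :=
  if c = 0 then bottomRowNew s m D else topRowNew s m D

/-- The `j`-th largest entry of a multiset of naturals (`j ≥ 1`). -/
def rowEntry (B : Multiset ℕ) (j : ℕ) : ℕ :=
  (B.sort (· ≤ ·)).getD (Multiset.card B - j) 0

/-- The `j`-th part of the partition encoded by a multiset of `card B` distinct
beta-numbers: `λ_j = (j-th largest entry) + j - card B`. -/
def rowPart (B : Multiset ℕ) (j : ℕ) : ℕ :=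
  if 1 ≤ j ∧ j ≤ Multiset.card B then rowEntry B j + j - Multiset.card B else 0

/-- The Young diagram of the bipartition with parts `p`, within the box of size `N`. -/
def toDiagram (p : Fin 2 → ℕ → ℕ) (N : ℕ) : Finset Node :=
  ((Finset.Icc 1 N) ×ˢ (Finset.Icc 1 N) ×ˢ (Finset.univ : Finset (Fin 2))).filter
    (fun γ => γ.2.1 ≤ p γ.2.2 γ.1)

/-- The map `Υ_{(s₀,s₁)}`: exchange the two entries of every pair of the `s`-symbol and
reorder the rows; `Upsilon s m D` is the diagram of the resulting bipartition. -/
def Upsilon (s : Fin 2 → ℕ) (m : ℕ) (D : Finset Node) : Finset Node :=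
  toDiagram (fun c j => rowPart (newRow s m D c) j) D.card

/-- The list of values `τ(α⁽⁰⁾_1), τ(α⁽⁰⁾_2), …` chosen greedily: at step `k + 1`
(handling `p = k + 1`) we choose the smallest entry of the top row `Top` not yet used
that is `≥ b (k+1)`, where `b p` is the `p`-th entry of the bottom row. -/
def tauList (Top : Finset ℕ) (b : ℕ → ℕ) : ℕ → List ℕ
  | 0 => []
  | k + 1 =>
      let prev := tauList Top b k
      prev ++ [WithTop.untopD 0 ((Top.filter (fun y => y ∉ prev ∧ b (k + 1) ≤ y)).min)]

/-- The greedy injection `τ`, as a function of the index `p ∈ {1, …, P}`. -/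
def tau (Top : Finset ℕ) (b : ℕ → ℕ) (P : ℕ) (p : ℕ) : ℕ :=
  (tauList Top b P).getD (p - 1) 0

end UglovPaper
namespace UglovPaper

/-- for two nodes of a bipartition with the same residue mod `e`,
`γ >_{(s₀,s₁)} γ₁` iff the component-swapped nodes satisfy `γ' >_{(s₁,s₀+e)} γ₁'`. -/
theorem order_swap (e : ℕ) (he : 1 < e) (s₀ s₁ : ℕ)
    (D : Finset Node) (hD : IsDiagram D)
    (a b : ℕ) (c : Fin 2) (a₁ b₁ : ℕ) (c₁ : Fin 2)
    (hγ : ((a, b, c) : Node) ∈ D) (hγ₁ : ((a₁, b₁, c₁) : Node) ∈ D)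
    (hres : res e ![(s₀ : ℤ), (s₁ : ℤ)] (a, b, c) =
      res e ![(s₀ : ℤ), (s₁ : ℤ)] (a₁, b₁, c₁)) :
    chargeLT ![(s₀ : ℤ), (s₁ : ℤ)] (a₁, b₁, c₁) (a, b, c) ↔
      chargeLT ![(s₁ : ℤ), (s₀ : ℤ) + e] (a₁, b₁, c₁ + 1) (a, b, c + 1) := by
  have hmod : cont ![(s₀ : ℤ), (s₁ : ℤ)] (a, b, c) ≡
      cont ![(s₀ : ℤ), (s₁ : ℤ)] (a₁, b₁, c₁) [ZMOD e] :=
    (ZMod.intCast_eq_intCast_iff _ _ _).mp hres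
  obtain ⟨k, hk⟩ := hmod.dvd
  have hcases : (e : ℤ) * k = 0 ∨ (e : ℤ) * k ≤ -e ∨ (e : ℤ) ≤ (e : ℤ) * k := by
    have he' : (0 : ℤ) ≤ e := by positivity
    rcases lt_trichotomy k 0 with h | h | h
    · right; left
      have := mul_le_mul_of_nonneg_left (show k ≤ -1 by omega) he'
      simpa using this
    · left; simp [h]
    · right; right
      have := mul_le_mul_of_nonneg_left (show (1 : ℤ) ≤ k by omega) he'
      simpa using this
  fin_cases c <;> fin_cases c₁ <;>
    simp only [chargeLT, cont, ncomp, ncol, nrow, Matrix.cons_val_zero,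
      Matrix.cons_val_one, Matrix.head_cons, Fin.isValue, Fin.zero_eta, Fin.mk_one,
      Fin.lt_def, Fin.val_zero, Fin.val_one, show ((0 : Fin 2) + 1) = 1 from rfl,
      show ((1 : Fin 2) + 1) = 0 from rfl] at hk ⊢ <;>
    omega

end UglovPaper
end

section
/- Fix an integer e>1, a charge (s_0,s_1)∈ℤ², and (v_0,v_1)∈{0,…,e−1}² with v_0 ≡ s_0 (mod e) and v_1 ≡ s_1 (mod e). If s_1 − s_0 > n − 1, then the set of Uglov bipartitions for (s_0,s_1) coincides with the set of negative Kleshchev bipartitions: Φ_{e,n}^{(s_0,s_1)} = Φ_{e,n}^{(v_0,v_1)−}. -/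
open Finset

namespace UglovPaper

section AuxProofs

variable {D : Finset Node} {γ x y : Node} {s : Fin 2 → ℤ} {e : ℕ}

lemma fin2_cases (c : Fin 2) : c = 0 ∨ c = 1 := by revert c; decide

lemma node_eta (γ : Node) : (nrow γ, ncol γ, ncomp γ) = γ := rfl

lemma mem_up (hD : IsDiagram D) (h : γ ∈ D) :
    ∀ a, 1 ≤ a → a ≤ nrow γ → ((a, ncol γ, ncomp γ) : Node) ∈ D := by
  have key : ∀ d a, 1 ≤ a → a + d = nrow γ → ((a, ncol γ, ncomp γ) : Node) ∈ D := by
    intro d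
    induction d with
    | zero =>
        intro a h1 h2
        have ha : a = nrow γ := by omega
        rw [ha, node_eta]; exact h
    | succ d ih =>
        intro a h1 h2
        have hmem := ih (a + 1) (by omega) (by omega)
        have h2' : 2 ≤ nrow ((a + 1, ncol γ, ncomp γ) : Node) := by
          show 2 ≤ a + 1; omega
        have := hD.2.2 _ hmem h2'
        simpa [nrow, ncol, ncomp] using this
  exact fun a h1 h2 => key (nrow γ - a) a h1 (by omega)

lemma rem_pos (hD : IsDiagram D) (h : Removable D γ) : 1 ≤ nrow γ ∧ 1 ≤ ncol γ :=
  hD.1 γ h.1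

lemma add_pos (h : Addable D γ) : 1 ≤ nrow γ ∧ 1 ≤ ncol γ :=
  h.2.1 γ (Finset.mem_insert_self γ D)

lemma add_mem_left (h : Addable D γ) {b : ℕ} (hb1 : 1 ≤ b) (hb2 : b < ncol γ) :
    ((nrow γ, b, ncomp γ) : Node) ∈ D := by
  have hm := h.2.2.1 γ (Finset.mem_insert_self γ D) b hb1 (le_of_lt hb2)
  rcases Finset.mem_insert.1 hm with h' | h'
  · have : b = ncol γ := congrArg (fun z : Node => z.2.1) h'
    omega
  · exact h'

lemma add_mem_up (h : Addable D γ) {a : ℕ} (ha1 : 1 ≤ a) (ha2 : a < nrow γ) :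
    ((a, ncol γ, ncomp γ) : Node) ∈ D := by
  have hm := mem_up h.2 (Finset.mem_insert_self γ D) a ha1 (le_of_lt ha2)
  rcases Finset.mem_insert.1 hm with h' | h'
  · have : a = nrow γ := congrArg (fun z : Node => z.1) h'
    omega
  · exact h'

lemma rem_not_right (hD : IsDiagram D) (h : Removable D γ) :
    ((nrow γ, ncol γ + 1, ncomp γ) : Node) ∉ D := by
  intro hz
  have hzne : ((nrow γ, ncol γ + 1, ncomp γ) : Node) ≠ γ := by
    intro h'
    have : ncol γ + 1 = ncol γ := congrArg (fun z : Node => z.2.1) h'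
    omega
  have hz' : ((nrow γ, ncol γ + 1, ncomp γ) : Node) ∈ D.erase γ := Finset.mem_erase.2 ⟨hzne, hz⟩
  have hcol : 1 ≤ ncol γ := (hD.1 γ h.1).2
  have hm := h.2.2.1 _ hz' (ncol γ) hcol (Nat.le_succ _)
  have : γ ∈ D.erase γ := by simpa [nrow, ncol, ncomp] using hm
  simp at this

lemma rem_not_below (hD : IsDiagram D) (h : Removable D γ) :
    ((nrow γ + 1, ncol γ, ncomp γ) : Node) ∉ D := by
  intro hz
  have hzne : ((nrow γ + 1, ncol γ, ncomp γ) : Node) ≠ γ := by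
    intro h'
    have : nrow γ + 1 = nrow γ := congrArg (fun z : Node => z.1) h'
    omega
  have hz' : ((nrow γ + 1, ncol γ, ncomp γ) : Node) ∈ D.erase γ := Finset.mem_erase.2 ⟨hzne, hz⟩
  have h2' : 2 ≤ nrow ((nrow γ + 1, ncol γ, ncomp γ) : Node) := by
    show 2 ≤ nrow γ + 1
    have := (hD.1 γ h.1).1; omega
  have hm := h.2.2.2 _ hz' h2'
  have : γ ∈ D.erase γ := by simpa [nrow, ncol, ncomp] using hm
  simp at this

end AuxProofs
section AuxProofs2

variable {D : Finset Node} {γ x y : Node} {s : Fin 2 → ℤ} {e : ℕ}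

/-- Number of nodes of `D` in component `c`. -/
def nc (D : Finset Node) (c : Fin 2) : ℕ := (D.filter fun γ => ncomp γ = c).card

lemma card_row_le {a m : ℕ} {c : Fin 2} (h : ∀ b, 1 ≤ b → b ≤ m → ((a, b, c) : Node) ∈ D) :
    m ≤ nc D c := by
  classical
  have hle := Finset.card_le_card_of_injOn (s := Finset.Icc 1 m)
    (t := D.filter fun γ => ncomp γ = c) (f := fun b => ((a, b, c) : Node))
    (fun b hb => by
      rcases Finset.mem_Icc.1 hb with ⟨h1, h2⟩
      exact Finset.mem_filter.2 ⟨h b h1 h2, rfl⟩)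
    (fun b _ b' _ hbb => congrArg (fun z : Node => z.2.1) hbb)
  simpa [nc] using hle

lemma card_col_le {b m : ℕ} {c : Fin 2} (h : ∀ a, 1 ≤ a → a ≤ m → ((a, b, c) : Node) ∈ D) :
    m ≤ nc D c := by
  classical
  have hle := Finset.card_le_card_of_injOn (s := Finset.Icc 1 m)
    (t := D.filter fun γ => ncomp γ = c) (f := fun a => ((a, b, c) : Node))
    (fun a ha => by
      rcases Finset.mem_Icc.1 ha with ⟨h1, h2⟩
      exact Finset.mem_filter.2 ⟨h a h1 h2, rfl⟩)
    (fun a _ a' _ haa => congrArg (fun z : Node => z.1) haa)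
  simpa [nc] using hle

lemma rem_col_le (hD : IsDiagram D) (h : Removable D γ) : ncol γ ≤ nc D (ncomp γ) :=
  card_row_le (a := nrow γ) fun b hb1 hb2 => hD.2.1 γ h.1 b hb1 hb2

lemma rem_row_le (hD : IsDiagram D) (h : Removable D γ) : nrow γ ≤ nc D (ncomp γ) :=
  card_col_le (b := ncol γ) fun a h1 h2 => mem_up hD h.1 a h1 h2

lemma add_col_le (h : Addable D γ) : ncol γ ≤ nc D (ncomp γ) + 1 := by
  have hle : ncol γ - 1 ≤ nc D (ncomp γ) :=
    card_row_le (a := nrow γ) fun b hb1 hb2 => add_mem_left h hb1 (by omega)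
  omega

lemma add_row_le (h : Addable D γ) : nrow γ ≤ nc D (ncomp γ) + 1 := by
  have hle : nrow γ - 1 ≤ nc D (ncomp γ) :=
    card_col_le (b := ncol γ) fun a h1 h2 => add_mem_up h h1 (by omega)
  omega

lemma nc_add (D : Finset Node) : nc D 0 + nc D 1 = D.card := by
  classical
  have h := Finset.card_filter_add_card_filter_not (s := D) (p := fun γ => ncomp γ = 0)
  have he : D.filter (fun γ => ¬ ncomp γ = 0) = D.filter (fun γ => ncomp γ = 1) := by
    apply Finset.filter_congr
    intro γ _
    rcases fin2_cases (ncomp γ) with h0 | h0 <;> simp [h0]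
  unfold nc
  rw [← h, he]

lemma cont_cross_lt (hD : IsDiagram D) (hcard : (D.card : ℤ) ≤ s 1 - s 0)
    (hx : Removable D x ∨ Addable D x) (hy : Removable D y ∨ Addable D y)
    (hx0 : ncomp x = 0) (hy1 : ncomp y = 1)
    (hrem : Removable D x ∨ Removable D y) : cont s x < cont s y := by
  have hnc := nc_add D
  have hx1 : 1 ≤ nrow x ∧ 1 ≤ ncol x := by
    rcases hx with h | h
    · exact rem_pos hD h
    · exact add_pos h
  have hy2 : 1 ≤ nrow y ∧ 1 ≤ ncol y := by
    rcases hy with h | h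
    · exact rem_pos hD h
    · exact add_pos h
  have hxc : ncol x ≤ nc D 0 + 1 := by
    rcases hx with h | h
    · have := rem_col_le hD h; rw [hx0] at this; omega
    · have := add_col_le h; rw [hx0] at this; omega
  have hyr : nrow y ≤ nc D 1 + 1 := by
    rcases hy with h | h
    · have := rem_row_le hD h; rw [hy1] at this; omega
    · have := add_row_le h; rw [hy1] at this; omega
  unfold cont
  rw [hx0, hy1]
  rcases hrem with h | h
  · have := rem_col_le hD h
    rw [hx0] at this
    omega
  · have := rem_row_le hD h
    rw [hy1] at this
    omega

lemma cont_lt_of_row_lt (hD : IsDiagram D)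
    (hx : Removable D x ∨ Addable D x) (hy : Removable D y ∨ Addable D y)
    (hc : ncomp x = ncomp y) (hrow : nrow x < nrow y) : cont s y < cont s x := by
  have hx1 : 1 ≤ nrow x ∧ 1 ≤ ncol x := by
    rcases hx with h | h
    · exact rem_pos hD h
    · exact add_pos h
  have m1 : ((nrow x, ncol y, ncomp x) : Node) ∈ D := by
    rw [hc]
    rcases hy with h | h
    · exact mem_up hD h.1 (nrow x) hx1.1 (le_of_lt hrow)
    · exact add_mem_up h hx1.1 hrow
  rcases hx with h | h
  · have hle : ncol y ≤ ncol x := by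
      by_contra hgt
      push_neg at hgt
      have hm := hD.2.1 _ m1 (ncol x + 1) (by omega)
        (by show ncol x + 1 ≤ ncol y; omega)
      exact rem_not_right hD h hm
    unfold cont
    rw [hc]
    omega
  · have hle : ncol y < ncol x := by
      by_contra hgt
      push_neg at hgt
      have hm := hD.2.1 _ m1 (ncol x) hx1.2 (by show ncol x ≤ ncol y; omega)
      simp only [nrow, ncol, ncomp, Prod.mk.eta] at hm
      exact h.1 hm
    unfold cont
    rw [hc]
    omega

end AuxProofs2
section AuxProofs3

variable {D : Finset Node} {γ x y : Node} {s : Fin 2 → ℤ} {e : ℕ}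

lemma res_dvd {x y : Node} (h : res e s x = res e s y) :
    (e : ℤ) ∣ cont s y - cont s x :=
  ((ZMod.intCast_eq_intCast_iff _ _ _).1 h).dvd

lemma eq_of_row_eq (he : 1 < e) (hD : IsDiagram D)
    (hx : Removable D x ∨ Addable D x) (hy : Removable D y ∨ Addable D y)
    (hc : ncomp x = ncomp y) (hrow : nrow x = nrow y)
    (hres : res e s x = res e s y) : x = y := by
  have hdvd := res_dvd hres
  have hcont : cont s y - cont s x = (ncol y : ℤ) - ncol x := by
    unfold cont
    rw [hc, hrow]
    ring
  rw [hcont] at hdvd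
  have hx1 : 1 ≤ nrow x ∧ 1 ≤ ncol x := by
    rcases hx with h | h
    · exact rem_pos hD h
    · exact add_pos h
  have hy1 : 1 ≤ nrow y ∧ 1 ≤ ncol y := by
    rcases hy with h | h
    · exact rem_pos hD h
    · exact add_pos h
  -- helper: derive a contradiction from `e ∣ d` with `0 < |d| < e`
  have hsmall : ∀ d : ℤ, (e : ℤ) ∣ d → d ≠ 0 → (e : ℤ) ≤ |d| := by
    intro d hd hd0
    exact Int.le_of_dvd (abs_pos.2 hd0) ((dvd_abs _ _).2 hd)
  have hcol : ncol x = ncol y := by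
    rcases hx with h | h <;> rcases hy with h' | h'
    · -- both removable
      have h1 : ¬ ncol x < ncol y := by
        intro hgt
        have hm := hD.2.1 y h'.1 (ncol x + 1) (by omega) (by omega)
        rw [← hc, ← hrow] at hm
        exact rem_not_right hD h hm
      have h2 : ¬ ncol y < ncol x := by
        intro hgt
        have hm := hD.2.1 x h.1 (ncol y + 1) (by omega) (by omega)
        rw [hc, hrow] at hm
        exact rem_not_right hD h' hm
      omega
    · -- x removable, y addable : impossible, ncol y = ncol x + 1 contradicts residues
      exfalso
      have hxy : ncol x + 1 ≤ ncol y := by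
        by_contra hlt
        push_neg at hlt
        have hm := hD.2.1 x h.1 (ncol y) hy1.2 (by omega)
        rw [hc, hrow, node_eta] at hm
        exact h'.1 hm
      have hxy2 : ncol y ≤ ncol x + 1 := by
        by_contra hlt
        push_neg at hlt
        have hm := add_mem_left h' (b := ncol x + 1) (by omega) (by omega)
        rw [← hc, ← hrow] at hm
        exact rem_not_right hD h hm
      have hd : (ncol y : ℤ) - ncol x = 1 := by omega
      rw [hd] at hdvd
      have := hsmall 1 hdvd (by norm_num)
      simp at this
      omega
    · -- x addable, y removable
      exfalso
      have hxy : ncol y + 1 ≤ ncol x := by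
        by_contra hlt
        push_neg at hlt
        have hm := hD.2.1 y h'.1 (ncol x) hx1.2 (by omega)
        rw [← hc, ← hrow, node_eta] at hm
        exact h.1 hm
      have hxy2 : ncol x ≤ ncol y + 1 := by
        by_contra hlt
        push_neg at hlt
        have hm := add_mem_left h (b := ncol y + 1) (by omega) (by omega)
        rw [hc, hrow] at hm
        exact rem_not_right hD h' hm
      have hd : (ncol y : ℤ) - ncol x = -1 := by omega
      rw [hd] at hdvd
      have := hsmall (-1) hdvd (by norm_num)
      simp at this
      omega
    · -- both addable
      have h1 : ¬ ncol x < ncol y := by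
        intro hgt
        have hm := add_mem_left h' (b := ncol x) hx1.2 hgt
        rw [← hc, ← hrow, node_eta] at hm
        exact h.1 hm
      have h2 : ¬ ncol y < ncol x := by
        intro hgt
        have hm := add_mem_left h (b := ncol y) hy1.2 hgt
        rw [hc, hrow, node_eta] at hm
        exact h'.1 hm
      omega
  -- assemble equality of nodes
  obtain ⟨ax, bx, cx⟩ := x
  obtain ⟨ay, by', cy⟩ := y
  simp only [nrow, ncol, ncomp] at hc hrow hcol
  rw [hrow, hcol, hc]

lemma chargeLT_trans {a b c : Node} (h1 : chargeLT s a b) (h2 : chargeLT s b c) :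
    chargeLT s a c := by
  rcases h1 with h1 | ⟨h1, h1'⟩ <;> rcases h2 with h2 | ⟨h2, h2'⟩
  · exact Or.inl (lt_trans h1 h2)
  · exact Or.inl (h2 ▸ h1)
  · exact Or.inl (h1 ▸ h2)
  · exact Or.inr ⟨h1.trans h2, lt_trans h2' h1'⟩

lemma negLT_trans {a b c : Node} (h1 : negLT a b) (h2 : negLT b c) : negLT a c := by
  rcases h1 with h1 | ⟨h1, h1'⟩ <;> rcases h2 with h2 | ⟨h2, h2'⟩
  · exact Or.inl (lt_trans h1 h2)
  · exact Or.inl (h2 ▸ h1)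
  · exact Or.inl (h1 ▸ h2)
  · exact Or.inr ⟨h1.trans h2, lt_trans h2' h1'⟩

lemma orders_agree (he : 1 < e) (hD : IsDiagram D) (hcard : (D.card : ℤ) ≤ s 1 - s 0)
    (hx : Removable D x ∨ Addable D x) (hy : Removable D y ∨ Addable D y)
    (hres : res e s x = res e s y) (hrem : Removable D x ∨ Removable D y) :
    chargeLT s x y ↔ negLT x y := by
  rcases fin2_cases (ncomp x) with hx0 | hx1 <;> rcases fin2_cases (ncomp y) with hy0 | hy1
  · -- both component 0
    have hc : ncomp x = ncomp y := by rw [hx0, hy0]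
    rcases lt_trichotomy (nrow x) (nrow y) with h | h | h
    · have hlt := cont_lt_of_row_lt (s := s) hD hx hy hc h
      constructor <;> intro hxy <;> exfalso
      · rcases hxy with hxy | ⟨hxy, _⟩ <;> omega
      · rcases hxy with hxy | ⟨_, hxy⟩
        · rw [hc] at hxy; exact lt_irrefl _ hxy
        · omega
    · have hxy := eq_of_row_eq he hD hx hy hc h hres
      subst hxy
      constructor <;> intro hxy <;> exfalso <;>
        rcases hxy with hxy | ⟨_, hxy⟩ <;> exact lt_irrefl _ hxy
    · have hlt := cont_lt_of_row_lt (s := s) hD hy hx hc.symm h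
      constructor <;> intro _
      · exact Or.inr ⟨hc, h⟩
      · exact Or.inl hlt
  · -- x in component 0, y in component 1
    have hlt := cont_cross_lt hD hcard hx hy hx0 hy1 hrem
    constructor <;> intro _
    · exact Or.inl (by rw [hx0, hy1]; decide)
    · exact Or.inl hlt
  · -- x in component 1, y in component 0
    have hlt := cont_cross_lt hD hcard hy hx hy0 hx1 hrem.symm
    constructor <;> intro hxy <;> exfalso
    · rcases hxy with hxy | ⟨hxy, _⟩ <;> omega
    · rcases hxy with hxy | ⟨hxy, _⟩ <;> rw [hx1, hy0] at hxy
      · exact absurd hxy (by decide)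
      · exact absurd hxy (by decide)
  · -- both component 1
    have hc : ncomp x = ncomp y := by rw [hx1, hy1]
    rcases lt_trichotomy (nrow x) (nrow y) with h | h | h
    · have hlt := cont_lt_of_row_lt (s := s) hD hx hy hc h
      constructor <;> intro hxy <;> exfalso
      · rcases hxy with hxy | ⟨hxy, _⟩ <;> omega
      · rcases hxy with hxy | ⟨_, hxy⟩
        · rw [hc] at hxy; exact lt_irrefl _ hxy
        · omega
    · have hxy := eq_of_row_eq he hD hx hy hc h hres
      subst hxy
      constructor <;> intro hxy <;> exfalso <;>
        rcases hxy with hxy | ⟨_, hxy⟩ <;> exact lt_irrefl _ hxy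
    · have hlt := cont_lt_of_row_lt (s := s) hD hy hx hc.symm h
      constructor <;> intro _
      · exact Or.inr ⟨hc, h⟩
      · exact Or.inl hlt

lemma charge_tri (he : 1 < e) (hD : IsDiagram D)
    (hx : Addable D x) (hy : Addable D y) (hres : res e s x = res e s y) :
    x = y ∨ chargeLT s x y ∨ chargeLT s y x := by
  by_cases hc : ncomp x = ncomp y
  · rcases lt_trichotomy (nrow x) (nrow y) with h | h | h
    · exact Or.inr (Or.inr (Or.inl (cont_lt_of_row_lt hD (Or.inr hx) (Or.inr hy) hc h)))
    · exact Or.inl (eq_of_row_eq he hD (Or.inr hx) (Or.inr hy) hc h hres)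
    · exact Or.inr (Or.inl (Or.inl (cont_lt_of_row_lt hD (Or.inr hy) (Or.inr hx) hc.symm h)))
  · rcases lt_trichotomy (cont s x) (cont s y) with h | h | h
    · exact Or.inr (Or.inl (Or.inl h))
    · rcases Ne.lt_or_gt hc with h' | h'
      · exact Or.inr (Or.inr (Or.inr ⟨h.symm, h'⟩))
      · exact Or.inr (Or.inl (Or.inr ⟨h, h'⟩))
    · exact Or.inr (Or.inr (Or.inl h))

lemma neg_tri (he : 1 < e) (hD : IsDiagram D)
    (hx : Addable D x) (hy : Addable D y) (hres : res e s x = res e s y) :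
    x = y ∨ negLT x y ∨ negLT y x := by
  by_cases hc : ncomp x = ncomp y
  · rcases lt_trichotomy (nrow x) (nrow y) with h | h | h
    · exact Or.inr (Or.inr (Or.inr ⟨hc.symm, h⟩))
    · exact Or.inl (eq_of_row_eq he hD (Or.inr hx) (Or.inr hy) hc h hres)
    · exact Or.inr (Or.inl (Or.inr ⟨hc, h⟩))
  · rcases Ne.lt_or_gt hc with h' | h'
    · exact Or.inr (Or.inl (Or.inl h'))
    · exact Or.inr (Or.inr (Or.inl h'))

end AuxProofs3
section AuxProofs4

variable {D : Finset Node} {γ x y : Node} {s : Fin 2 → ℤ} {e : ℕ}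

lemma addable_finite (D : Finset Node) : {x : Node | Addable D x}.Finite := by
  classical
  apply Set.Finite.subset
    ((Finset.Icc 1 (D.card + 1) ×ˢ Finset.Icc 1 (D.card + 1) ×ˢ
      (Finset.univ : Finset (Fin 2))).finite_toSet)
  intro x hx
  have h1 := add_pos hx
  have h2 := add_row_le hx
  have h3 := add_col_le hx
  have h4 : nc D (ncomp x) ≤ D.card := Finset.card_filter_le _ _
  simp only [Finset.coe_product, Set.mem_prod, Finset.mem_coe, Finset.mem_Icc,
    Finset.mem_univ, and_true]
  refine ⟨⟨h1.1, ?_⟩, ⟨h1.2, ?_⟩⟩ <;> simp only [nrow, ncol] at * <;> omega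

lemma removable_finite (D : Finset Node) : {x : Node | Removable D x}.Finite :=
  D.finite_toSet.subset fun x hx => hx.1

lemma finset_exists_max {β : Type*} (lt : β → β → Prop)
    (htr : ∀ {a b c : β}, lt a b → lt b c → lt a c) (t : Finset β) :
    t.Nonempty → (∀ x ∈ t, ∀ y ∈ t, x = y ∨ lt x y ∨ lt y x) →
    ∃ m ∈ t, ∀ x ∈ t, x = m ∨ lt x m := by
  classical
  induction t using Finset.induction_on with
  | empty => intro h; exact absurd h (by simp)
  | insert a t ha ih =>
      intro _ htot
      rcases t.eq_empty_or_nonempty with rfl | hne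
      · refine ⟨a, Finset.mem_insert_self _ _, ?_⟩
        intro x hx
        rcases Finset.mem_insert.1 hx with rfl | hx
        · exact Or.inl rfl
        · exact absurd hx (by simp)
      · obtain ⟨m, hm, hmax⟩ := ih hne
          (fun x hx y hy => htot x (Finset.mem_insert_of_mem hx) y (Finset.mem_insert_of_mem hy))
        rcases htot a (Finset.mem_insert_self a t) m (Finset.mem_insert_of_mem hm) with h | h | h
        · refine ⟨m, Finset.mem_insert_of_mem hm, ?_⟩
          intro x hx
          rcases Finset.mem_insert.1 hx with rfl | hx
          · exact Or.inl h
          · exact hmax x hx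
        · refine ⟨m, Finset.mem_insert_of_mem hm, ?_⟩
          intro x hx
          rcases Finset.mem_insert.1 hx with rfl | hx
          · exact Or.inr h
          · exact hmax x hx
        · refine ⟨a, Finset.mem_insert_self a t, ?_⟩
          intro x hx
          rcases Finset.mem_insert.1 hx with rfl | hx
          · exact Or.inl rfl
          · rcases hmax x hx with rfl | h'
            · exact Or.inr h
            · exact Or.inr (htr h' h)

lemma normal_cond_transfer {α : Type*} {D : Finset Node} (lt₁ lt₂ : Node → Node → Prop)
    (r : Node → α) (i : α)
    (htr₂ : ∀ {a b c : Node}, lt₂ a b → lt₂ b c → lt₂ a c)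
    (hagree : ∀ x y : Node, (Removable D x ∨ Addable D x) → (Removable D y ∨ Addable D y) →
      r x = r y → (Removable D x ∨ Removable D y) → (lt₁ x y ↔ lt₂ x y))
    (htri : ∀ x y : Node, Addable D x → Addable D y → r x = r y → x = y ∨ lt₁ x y ∨ lt₁ y x)
    (htr₁ : ∀ {a b c : Node}, lt₁ a b → lt₁ b c → lt₁ a c)
    {γ : Node} (hγ : Removable D γ) (hγr : r γ = i)
    (hcond : ∀ η : Node, r η = i → lt₁ γ η →
      {x : Node | Addable D x ∧ r x = i ∧ lt₁ γ x ∧ (lt₁ x η ∨ x = η)}.ncard ≤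
      {x : Node | Removable D x ∧ r x = i ∧ lt₁ γ x ∧ (lt₁ x η ∨ x = η)}.ncard) :
    ∀ η : Node, r η = i → lt₂ γ η →
      {x : Node | Addable D x ∧ r x = i ∧ lt₂ γ x ∧ (lt₂ x η ∨ x = η)}.ncard ≤
      {x : Node | Removable D x ∧ r x = i ∧ lt₂ γ x ∧ (lt₂ x η ∨ x = η)}.ncard := by
  intro η hηr hγη
  classical
  set T := {x : Node | Addable D x ∧ r x = i ∧ lt₂ γ x ∧ (lt₂ x η ∨ x = η)} with hTdef
  have hTfin : T.Finite := (addable_finite D).subset fun x hx => hx.1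
  rcases T.eq_empty_or_nonempty with hTe | hTne
  · rw [hTe, Set.ncard_empty]
    exact Nat.zero_le _
  · obtain ⟨m, hmt, hmax⟩ := finset_exists_max lt₁ htr₁ hTfin.toFinset
      (by rwa [Set.Finite.toFinset_nonempty])
      (fun x hx y hy => htri x y (hTfin.mem_toFinset.1 hx).1 (hTfin.mem_toFinset.1 hy).1
        (((hTfin.mem_toFinset.1 hx).2.1).trans ((hTfin.mem_toFinset.1 hy).2.1).symm))
    have hm : m ∈ T := hTfin.mem_toFinset.1 hmt
    obtain ⟨hmA, hmr, hγm₂, hmη⟩ := hm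
    have hγm₁ : lt₁ γ m :=
      (hagree γ m (Or.inl hγ) (Or.inr hmA) (hγr.trans hmr.symm) (Or.inl hγ)).2 hγm₂
    have hsub1 : T ⊆ {x : Node | Addable D x ∧ r x = i ∧ lt₁ γ x ∧ (lt₁ x m ∨ x = m)} := by
      intro x hx
      obtain ⟨hxA, hxr, hγx, hxη⟩ := hx
      refine ⟨hxA, hxr,
        (hagree γ x (Or.inl hγ) (Or.inr hxA) (hγr.trans hxr.symm) (Or.inl hγ)).2 hγx, ?_⟩
      have hxT : x ∈ T := ⟨hxA, hxr, hγx, hxη⟩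
      rcases hmax x (hTfin.mem_toFinset.2 hxT) with h | h
      · exact Or.inr h
      · exact Or.inl h
    have h1 : T.ncard ≤ {x : Node | Addable D x ∧ r x = i ∧ lt₁ γ x ∧ (lt₁ x m ∨ x = m)}.ncard :=
      Set.ncard_le_ncard hsub1 ((addable_finite D).subset fun x hx => hx.1)
    have h2 := hcond m hmr hγm₁
    have hsub2 : {x : Node | Removable D x ∧ r x = i ∧ lt₁ γ x ∧ (lt₁ x m ∨ x = m)} ⊆
        {x : Node | Removable D x ∧ r x = i ∧ lt₂ γ x ∧ (lt₂ x η ∨ x = η)} := by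
      rintro x ⟨hxR, hxr, hγx, hxm⟩
      refine ⟨hxR, hxr,
        (hagree γ x (Or.inl hγ) (Or.inl hxR) (hγr.trans hxr.symm) (Or.inl hγ)).1 hγx, ?_⟩
      have hxm' : lt₂ x m := by
        rcases hxm with h | rfl
        · exact (hagree x m (Or.inl hxR) (Or.inr hmA) (hxr.trans hmr.symm) (Or.inl hxR)).1 h
        · exact absurd hxR.1 hmA.1
      rcases hmη with h | rfl
      · exact Or.inl (htr₂ hxm' h)
      · exact Or.inl hxm'
    have h3 := Set.ncard_le_ncard hsub2 ((removable_finite D).subset fun x hx => hx.1)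
    exact le_trans h1 (le_trans h2 h3)

lemma normalNode_iff (he : 1 < e) (hD : IsDiagram D)
    (hcard : (D.card : ℤ) ≤ s 1 - s 0) (i : ZMod e) (γ : Node) :
    NormalNode D (chargeLT s) (res e s) i γ ↔ NormalNode D negLT (res e s) i γ := by
  constructor
  · rintro ⟨hrem, hri, hcond⟩
    exact ⟨hrem, hri, normal_cond_transfer (chargeLT s) negLT (res e s) i
      (fun h1 h2 => negLT_trans h1 h2)
      (fun x y hx hy hres hr => orders_agree he hD hcard hx hy hres hr)
      (fun x y hx hy hres => charge_tri he hD hx hy hres)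
      (fun h1 h2 => chargeLT_trans h1 h2) hrem hri hcond⟩
  · rintro ⟨hrem, hri, hcond⟩
    exact ⟨hrem, hri, normal_cond_transfer negLT (chargeLT s) (res e s) i
      (fun h1 h2 => chargeLT_trans h1 h2)
      (fun x y hx hy hres hr => (orders_agree he hD hcard hx hy hres hr).symm)
      (fun x y hx hy hres => neg_tri he hD hx hy hres)
      (fun h1 h2 => negLT_trans h1 h2) hrem hri hcond⟩

lemma goodNode_iff (he : 1 < e) (hD : IsDiagram D)
    (hcard : (D.card : ℤ) ≤ s 1 - s 0) (i : ZMod e) (γ : Node) :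
    GoodNode D (chargeLT s) (res e s) i γ ↔ GoodNode D negLT (res e s) i γ := by
  constructor
  · rintro ⟨hn, hmin⟩
    refine ⟨(normalNode_iff he hD hcard i γ).1 hn, ?_⟩
    intro δ hδ
    have hδ' := (normalNode_iff he hD hcard i δ).2 hδ
    rcases hmin δ hδ' with h | h
    · exact Or.inl h
    · exact Or.inr ((orders_agree he hD hcard (Or.inl hn.1) (Or.inl hδ'.1)
        (hn.2.1.trans hδ'.2.1.symm) (Or.inl hn.1)).1 h)
  · rintro ⟨hn, hmin⟩
    refine ⟨(normalNode_iff he hD hcard i γ).2 hn, ?_⟩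
    intro δ hδ
    have hδ' := (normalNode_iff he hD hcard i δ).1 hδ
    rcases hmin δ hδ' with h | h
    · exact Or.inl h
    · exact Or.inr ((orders_agree he hD hcard (Or.inl hn.1) (Or.inl hδ.1)
        (hn.2.1.trans hδ.2.1.symm) (Or.inl hn.1)).2 h)

lemma crystalSet_card {α : Type*} {lt : Node → Node → Prop} {r : Node → α} :
    ∀ {n : ℕ} {D : Finset Node}, CrystalSet lt r n D → D.card = n := by
  intro n D h
  induction h with
  | empty => simp
  | @step n D γ i hD hg hc ih =>
      have hγD : γ ∈ D := hg.1.1.1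
      rw [Finset.card_erase_of_mem hγD] at ih
      have hpos : 0 < D.card := Finset.card_pos.2 ⟨γ, hγD⟩
      omega

lemma crystal_to_neg (he : 1 < e) {s : Fin 2 → ℤ} :
    ∀ {n : ℕ} {D : Finset Node}, CrystalSet (chargeLT s) (res e s) n D →
      (n : ℤ) ≤ s 1 - s 0 → CrystalSet negLT (res e s) n D := by
  intro n D h
  induction h with
  | empty => intro _; exact CrystalSet.empty
  | @step n D γ i hD hg hc ih =>
      intro hn
      have hcard : D.card = n + 1 := crystalSet_card (CrystalSet.step i hD hg hc)
      have hcard' : (D.card : ℤ) ≤ s 1 - s 0 := by rw [hcard]; push_cast at hn ⊢; omega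
      exact CrystalSet.step i hD ((goodNode_iff he hD hcard' i γ).1 hg)
        (ih (by push_cast at hn ⊢; omega))

lemma crystal_to_charge (he : 1 < e) {s : Fin 2 → ℤ} :
    ∀ {n : ℕ} {D : Finset Node}, CrystalSet negLT (res e s) n D →
      (n : ℤ) ≤ s 1 - s 0 → CrystalSet (chargeLT s) (res e s) n D := by
  intro n D h
  induction h with
  | empty => intro _; exact CrystalSet.empty
  | @step n D γ i hD hg hc ih =>
      intro hn
      have hcard : D.card = n + 1 := crystalSet_card (CrystalSet.step i hD hg hc)
      have hcard' : (D.card : ℤ) ≤ s 1 - s 0 := by rw [hcard]; push_cast at hn ⊢; omega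
      exact CrystalSet.step i hD ((goodNode_iff he hD hcard' i γ).2 hg)
        (ih (by push_cast at hn ⊢; omega))

end AuxProofs4

/-- if `s₁ - s₀ > n - 1` then `Φ_{e,n}^{(s₀,s₁)} = Φ_{e,n}^{(v₀,v₁)₋}`. -/
theorem uglovSet_eq_kleshchevNeg (e : ℕ) (he : 1 < e) (n : ℕ) (s₀ s₁ v₀ v₁ : ℤ)
    (hv₀ : 0 ≤ v₀ ∧ v₀ < e) (hv₁ : 0 ≤ v₁ ∧ v₁ < e)
    (h₀ : Int.ModEq (e : ℤ) v₀ s₀) (h₁ : Int.ModEq (e : ℤ) v₁ s₁)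
    (hn : (n : ℤ) - 1 < s₁ - s₀) :
    ∀ D : Finset Node, UglovSet e ![s₀, s₁] n D ↔ KleshchevNeg e ![v₀, v₁] n D := by
  intro D
  have hres : res e ![v₀, v₁] = res e ![s₀, s₁] := by
    funext γ
    unfold res cont
    rcases fin2_cases (ncomp γ) with h | h <;> rw [h] <;>
      simp only [Matrix.cons_val_zero, Matrix.cons_val_one, Matrix.head_cons] <;>
      rw [ZMod.intCast_eq_intCast_iff]
    · exact Int.ModEq.add_left _ h₀
    · exact Int.ModEq.add_left _ h₁
  have hb : (n : ℤ) ≤ (![s₀, s₁] : Fin 2 → ℤ) 1 - (![s₀, s₁] : Fin 2 → ℤ) 0 := by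
    simp only [Matrix.cons_val_zero, Matrix.cons_val_one, Matrix.head_cons]
    omega
  constructor
  · intro h
    unfold KleshchevNeg
    rw [hres]
    exact crystal_to_neg he h hb
  · intro h
    unfold UglovSet
    have h' : CrystalSet negLT (res e ![s₀, s₁]) n D := by
      unfold KleshchevNeg at h
      rwa [hres] at h
    exact crystal_to_charge he h' hb

end UglovPaper
end

section
/- Fix an integer e>1, a charge (s_0,s_1)∈ℤ² with s_0 − s_1 > n − 1, and (v_0,v_1)∈{0,…,e−1}² with v_0 ≡ s_0 (mod e) and v_1 ≡ s_1 (mod e). Let λ be a bipartition of rank n, let γ be a removable i-node of λ and let γ' be an addable or removable i-node of λ (same residue i mod e). Then γ <_{(s_0,s_1)} γ' if and only if γ <_{(v_0,v_1)+} γ'. -/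
open Finset

namespace UglovPaper

/-! ### Auxiliary lemmas for Statement 9 -/

variable {D : Finset Node}

lemma row_mem' (hD : IsDiagram D) {a b : ℕ} {c : Fin 2} (h : (a,b,c) ∈ D)
    {b' : ℕ} (h1 : 1 ≤ b') (h2 : b' ≤ b) : (a,b',c) ∈ D :=
  hD.2.1 (a,b,c) h b' h1 h2

lemma col_mem' (hD : IsDiagram D) : ∀ (a : ℕ) {b : ℕ} {c : Fin 2}, (a,b,c) ∈ D →
    ∀ j, 1 ≤ j → j ≤ a → (j,b,c) ∈ D := by
  intro a
  induction a with
  | zero => intro b c h j h1 h2; omega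
  | succ a ih =>
    intro b c h j h1 h2
    rcases Nat.eq_or_lt_of_le h2 with rfl | hlt
    · exact h
    · have ha : 2 ≤ nrow ((a+1 : ℕ),b,c) := by simp [nrow]; omega
      have h3 := hD.2.2 (a+1,b,c) h ha
      simp only [nrow, ncol, ncomp, Nat.add_sub_cancel] at h3
      exact ih h3 j h1 (by omega)

lemma mem_iff_part (hD : IsDiagram D) (a b : ℕ) (c : Fin 2) :
    (a,b,c) ∈ D ↔ 1 ≤ b ∧ b ≤ part D c a := by
  constructor
  · intro h
    refine ⟨(hD.1 _ h).2, ?_⟩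
    have hle : (Finset.Icc 1 b).card ≤ (D.filter (fun γ => nrow γ = a ∧ ncomp γ = c)).card := by
      apply Finset.card_le_card_of_injOn (fun b' => (a,b',c))
      · intro b' hb'
        simp only [Finset.mem_coe, Finset.mem_Icc] at hb'
        exact Finset.mem_filter.mpr ⟨row_mem' hD h hb'.1 hb'.2, rfl, rfl⟩
      · intro x _ y _ hxy
        simpa using hxy
    simpa [part, Nat.card_Icc] using hle
  · rintro ⟨h1, h2⟩
    by_contra hne
    have hsub : (D.filter (fun γ => nrow γ = a ∧ ncomp γ = c)) ⊆
        (Finset.Icc 1 (b-1)).image (fun b' => (a,b',c)) := by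
      rintro ⟨x1, x2, x3⟩ hx
      have hx := Finset.mem_filter.mp hx
      simp only [Finset.mem_filter, nrow, ncomp] at hx
      obtain ⟨hxD, hxa, hxc⟩ := hx
      subst hxa; subst hxc
      have h1' : 1 ≤ x2 := (hD.1 _ hxD).2
      have h2' : x2 ≤ b - 1 := by
        by_contra hgt
        exact hne (row_mem' hD hxD h1 (by omega))
      exact Finset.mem_image.mpr ⟨x2, Finset.mem_Icc.mpr ⟨h1', h2'⟩, rfl⟩
    have hc1 := Finset.card_le_card hsub
    have hc2 := Finset.card_image_le (s := Finset.Icc 1 (b-1)) (f := fun b' => ((a,b',c) : Node))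
    have hc3 : (Finset.Icc 1 (b-1)).card = b - 1 := by simp [Nat.card_Icc]
    simp only [part] at h2
    omega

lemma part_mono (hD : IsDiagram D) {c : Fin 2} {a a' : ℕ} (h1 : 1 ≤ a) (h2 : a ≤ a') :
    part D c a' ≤ part D c a := by
  rcases Nat.eq_zero_or_pos (part D c a') with h | h
  · omega
  · have hmem : (a', part D c a', c) ∈ D := (mem_iff_part hD _ _ _).mpr ⟨h, le_refl _⟩
    exact ((mem_iff_part hD _ _ _).mp (col_mem' hD a' hmem a h1 h2)).2

lemma removable_facts (hD : IsDiagram D) {a b : ℕ} {c : Fin 2} (h : Removable D (a,b,c)) :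
    1 ≤ a ∧ 1 ≤ b ∧ b = part D c a ∧ part D c (a+1) < b := by
  obtain ⟨hmem, hdiag⟩ := h
  have hab := hD.1 _ hmem
  simp only [nrow, ncol] at hab
  have hble : b ≤ part D c a := ((mem_iff_part hD _ _ _).mp hmem).2
  have heq : b = part D c a := by
    by_contra hne
    have hp : (a, part D c a, c) ∈ D := (mem_iff_part hD _ _ _).mpr ⟨by omega, le_refl _⟩
    have hp' : (a, part D c a, c) ∈ D.erase (a,b,c) :=
      Finset.mem_erase.mpr ⟨by simp [Prod.ext_iff]; omega, hp⟩
    have h3 := hdiag.2.1 _ hp' b hab.2 (by simp [ncol]; omega)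
    exact (Finset.notMem_erase _ _) h3
  refine ⟨hab.1, hab.2, heq, ?_⟩
  by_contra hge
  have hp : (a+1, b, c) ∈ D := (mem_iff_part hD _ _ _).mpr ⟨hab.2, by omega⟩
  have hp' : (a+1, b, c) ∈ D.erase (a,b,c) :=
    Finset.mem_erase.mpr ⟨by simp [Prod.ext_iff], hp⟩
  have h3 := hdiag.2.2 _ hp' (by show 2 ≤ a + 1; omega)
  simp only [nrow, ncol, ncomp, Nat.add_sub_cancel] at h3
  exact (Finset.notMem_erase _ _) h3

lemma addable_facts (hD : IsDiagram D) {a b : ℕ} {c : Fin 2} (h : Addable D (a,b,c)) :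
    1 ≤ a ∧ 1 ≤ b ∧ b = part D c a + 1 ∧ (2 ≤ a → (a-1, b, c) ∈ D) := by
  obtain ⟨hnm, hdiag⟩ := h
  have hmem : ((a,b,c) : Node) ∈ insert (a,b,c) D := Finset.mem_insert_self _ _
  have hab := hdiag.1 _ hmem
  simp only [nrow, ncol] at hab
  have hub : part D c a < b := by
    by_contra hge
    exact hnm ((mem_iff_part hD _ _ _).mpr ⟨hab.2, by omega⟩)
  have hlb : b - 1 ≤ part D c a := by
    rcases Nat.lt_or_ge b 2 with hb | hb
    · omega
    · have h2 : ((a, b-1, c) : Node) ∈ insert ((a,b,c) : Node) D :=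
        hdiag.2.1 _ hmem (b-1) (by omega) (by show b - 1 ≤ b; omega)
      have hD' : ((a, b-1, c) : Node) ∈ D := by
        rcases Finset.mem_insert.mp h2 with h' | h'
        · exfalso; simp [Prod.ext_iff] at h'; omega
        · exact h'
      have := ((mem_iff_part hD _ _ _).mp hD').2
      omega
  refine ⟨hab.1, hab.2, by omega, ?_⟩
  intro ha2
  have h3 := hdiag.2.2 _ hmem (ha2 : 2 ≤ nrow (a,b,c))
  simp only [nrow, ncol, ncomp] at h3
  rcases Finset.mem_insert.mp h3 with h' | h'
  · exfalso; simp [Prod.ext_iff] at h'; omega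
  · exact h'

lemma hook_bound (hD : IsDiagram D) {a b : ℕ} {c : Fin 2} (h : (a,b,c) ∈ D) :
    a + b ≤ (D.filter (fun γ => ncomp γ = c)).card + 1 := by
  have hab := hD.1 _ h
  simp only [nrow, ncol] at hab
  have hrow : (Finset.Icc 1 b).image (fun b' => ((a,b',c) : Node)) ⊆
      D.filter (fun γ => ncomp γ = c) := by
    intro x hx
    simp only [Finset.mem_image, Finset.mem_Icc] at hx
    obtain ⟨b', ⟨h1,h2⟩, rfl⟩ := hx
    exact Finset.mem_filter.mpr ⟨row_mem' hD h h1 h2, rfl⟩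
  have hcol : (Finset.Icc 1 (a-1)).image (fun j => ((j,b,c) : Node)) ⊆
      D.filter (fun γ => ncomp γ = c) := by
    intro x hx
    simp only [Finset.mem_image, Finset.mem_Icc] at hx
    obtain ⟨j, ⟨h1,h2⟩, rfl⟩ := hx
    exact Finset.mem_filter.mpr ⟨col_mem' hD a h j h1 (by omega), rfl⟩
  have hdisj : Disjoint ((Finset.Icc 1 b).image (fun b' => ((a,b',c) : Node)))
      ((Finset.Icc 1 (a-1)).image (fun j => ((j,b,c) : Node))) := by
    rw [Finset.disjoint_left]
    rintro x hx hy
    simp only [Finset.mem_image, Finset.mem_Icc] at hx hy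
    obtain ⟨b', hb', rfl⟩ := hx
    obtain ⟨j, hj, hxy⟩ := hy
    have : j = a := (Prod.ext_iff.mp hxy).1
    omega
  have hcard1 : ((Finset.Icc 1 b).image (fun b' => ((a,b',c) : Node))).card = b := by
    rw [Finset.card_image_of_injective _ (fun x y hxy => by simpa using hxy)]
    simp [Nat.card_Icc]
  have hcard2 : ((Finset.Icc 1 (a-1)).image (fun j => ((j,b,c) : Node))).card = a - 1 := by
    rw [Finset.card_image_of_injective _ (fun x y hxy => by simpa using hxy)]
    simp [Nat.card_Icc]
  have hle : b + (a - 1) ≤ (D.filter (fun γ => ncomp γ = c)).card := by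
    rw [← hcard1, ← hcard2, ← Finset.card_union_of_disjoint hdisj]
    exact Finset.card_le_card (Finset.union_subset hrow hcol)
  omega

lemma part_le_comp (a : ℕ) (c : Fin 2) :
    part D c a ≤ (D.filter (fun γ => ncomp γ = c)).card := by
  apply Finset.card_le_card
  intro x hx
  simp only [Finset.mem_filter] at hx ⊢
  exact ⟨hx.1, hx.2.2⟩

lemma addrem_hook (hD : IsDiagram D) {a b : ℕ} {c : Fin 2}
    (h : Addable D (a,b,c) ∨ Removable D (a,b,c)) :
    1 ≤ a ∧ 1 ≤ b ∧ a + b ≤ (D.filter (fun γ => ncomp γ = c)).card + 2 := by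
  rcases h with h | h
  · obtain ⟨h1, h2, h3, h4⟩ := addable_facts hD h
    refine ⟨h1, h2, ?_⟩
    rcases Nat.lt_or_ge a 2 with ha | ha
    · have := part_le_comp (D := D) a c
      omega
    · have := hook_bound hD (h4 ha)
      omega
  · obtain ⟨hm, _⟩ := h
    have h1 := hook_bound hD hm
    have h2 := hD.1 _ hm
    simp only [nrow, ncol] at h2
    exact ⟨h2.1, h2.2, by omega⟩

lemma same_comp_key (hD : IsDiagram D) {e : ℕ} (he : 1 < e) {a b a' b' : ℕ} {c : Fin 2}
    (hγ : Removable D (a,b,c)) (hγ' : Addable D (a',b',c) ∨ Removable D (a',b',c))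
    (hmod : (e:ℤ) ∣ ((b':ℤ) - a') - ((b:ℤ) - a)) :
    ((b:ℤ) - a < (b':ℤ) - a' ↔ a' < a) := by
  obtain ⟨ha1, hb1, hbe, hlt⟩ := removable_facts hD hγ
  have ha'1 : 1 ≤ a' := (addrem_hook hD hγ').1
  rcases lt_trichotomy a' a with h | h | h
  · have hp : part D c a ≤ part D c a' := part_mono hD ha'1 (le_of_lt h)
    have hb' : b ≤ b' := by
      rcases hγ' with h' | h'
      · obtain ⟨_,_,he',_⟩ := addable_facts hD h'; omega
      · obtain ⟨_,_,he',_⟩ := removable_facts hD h'; omega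
    omega
  · rcases hγ' with h' | h'
    · obtain ⟨_,_,he',_⟩ := addable_facts hD h'
      exfalso
      rw [h] at he'
      have heq : ((b':ℤ) - a') - ((b:ℤ) - a) = 1 := by omega
      rw [heq] at hmod
      have := Int.le_of_dvd one_pos hmod
      omega
    · obtain ⟨_,_,he',_⟩ := removable_facts hD h'
      rw [h] at he'
      omega
  · have hp : part D c a' ≤ part D c (a+1) := part_mono hD (by omega) (by omega)
    have hb' : b' ≤ b := by
      rcases hγ' with h' | h'
      · obtain ⟨_,_,he',_⟩ := addable_facts hD h'; omega
      · obtain ⟨_,_,he',_⟩ := removable_facts hD h'; omega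
    omega

/-- if `s₀ - s₁ > n - 1` then, for a removable `i`-node `γ` and an addable or
removable `i`-node `γ'` of a bipartition of rank `n`, `γ <_{(s₀,s₁)} γ'` iff
`γ <_{(v₀,v₁)₊} γ'`. -/
theorem chargeLT_iff_posLT (e : ℕ) (he : 1 < e) (n : ℕ) (s₀ s₁ v₀ v₁ : ℤ)
    (hv₀ : 0 ≤ v₀ ∧ v₀ < e) (hv₁ : 0 ≤ v₁ ∧ v₁ < e)
    (h₀ : Int.ModEq (e : ℤ) v₀ s₀) (h₁ : Int.ModEq (e : ℤ) v₁ s₁)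
    (hn : (n : ℤ) - 1 < s₀ - s₁)
    (D : Finset Node) (hD : IsDiagram D) (hcard : D.card = n)
    (γ γ' : Node) (hγ : Removable D γ) (hγ' : Addable D γ' ∨ Removable D γ')
    (hres : res e ![s₀, s₁] γ = res e ![s₀, s₁] γ') :
    chargeLT ![s₀, s₁] γ γ' ↔ posLT γ γ' := by
  have hmod0 : (e:ℤ) ∣ cont ![s₀,s₁] γ' - cont ![s₀,s₁] γ := by
    have h := hres
    simp only [res] at h
    rw [ZMod.intCast_eq_intCast_iff] at h
    exact Int.ModEq.dvd h
  obtain ⟨a, b, c⟩ := γ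
  obtain ⟨a', b', c'⟩ := γ'
  have hN : (D.filter (fun x => ncomp x = (0:Fin 2))).card
      + (D.filter (fun x => ncomp x = (1:Fin 2))).card ≤ n := by
    have h0 := Finset.card_filter_add_card_filter_not (s := D)
      (p := fun x => ncomp x = (0:Fin 2))
    have h1 : D.filter (fun x => ¬ ncomp x = (0:Fin 2))
        = D.filter (fun x => ncomp x = (1:Fin 2)) := by
      apply Finset.filter_congr
      intro x _
      constructor
      · intro hx; omega
      · intro hx; rw [hx]; decide
    rw [h1] at h0
    omega
  simp only [cont, ncol, nrow, ncomp] at hmod0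
  fin_cases c <;> fin_cases c' <;>
    simp only [Fin.mk_zero, Fin.mk_one, Fin.isValue] at hmod0 hγ hγ' ⊢ <;>
    simp only [Matrix.cons_val_zero, Matrix.cons_val_one, Matrix.head_cons] at hmod0
  · -- c = 0, c' = 0
    have hmod' : (e:ℤ) ∣ ((b':ℤ) - a') - ((b:ℤ) - a) := by
      have heq : ((b':ℤ) - a' + s₀) - ((b:ℤ) - a + s₀) = ((b':ℤ) - a') - ((b:ℤ) - a) := by ring
      rwa [heq] at hmod0
    have key := same_comp_key hD he hγ hγ' hmod'
    simp only [chargeLT, posLT, cont, ncol, nrow, ncomp, Matrix.cons_val_zero,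
      Matrix.cons_val_one, Matrix.head_cons, Fin.lt_def, Fin.ext_iff, Fin.val_zero, Fin.val_one,
      lt_self_iff_false, and_false, false_or, or_false, true_and, and_true, eq_self_iff_true]
    by_cases hc : a' < a
    · have h2 := key.mpr hc
      omega
    · have h2 : ¬ ((b:ℤ) - a < (b':ℤ) - a') := fun h => hc (key.mp h)
      omega
  · -- c = 0, c' = 1
    obtain ⟨ha1, hb1, hk⟩ : 1 ≤ a ∧ 1 ≤ b ∧
        a + b ≤ (D.filter (fun x => ncomp x = (0:Fin 2))).card + 1 := by
      obtain ⟨hm, -⟩ := hγ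
      have h1 := hook_bound hD hm
      have h2 := hD.1 _ hm
      simp only [nrow, ncol] at h2
      exact ⟨h2.1, h2.2, h1⟩
    obtain ⟨ha1', hb1', hk'⟩ := addrem_hook hD hγ'
    simp only [chargeLT, posLT, cont, ncol, nrow, ncomp, Matrix.cons_val_zero,
      Matrix.cons_val_one, Matrix.head_cons, Fin.lt_def, Fin.ext_iff, Fin.val_zero, Fin.val_one]
    omega
  · -- c = 1, c' = 0
    obtain ⟨ha1, hb1, hk⟩ : 1 ≤ a ∧ 1 ≤ b ∧
        a + b ≤ (D.filter (fun x => ncomp x = (1:Fin 2))).card + 1 := by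
      obtain ⟨hm, -⟩ := hγ
      have h1 := hook_bound hD hm
      have h2 := hD.1 _ hm
      simp only [nrow, ncol] at h2
      exact ⟨h2.1, h2.2, h1⟩
    obtain ⟨ha1', hb1', hk'⟩ := addrem_hook hD hγ'
    simp only [chargeLT, posLT, cont, ncol, nrow, ncomp, Matrix.cons_val_zero,
      Matrix.cons_val_one, Matrix.head_cons, Fin.lt_def, Fin.ext_iff, Fin.val_zero, Fin.val_one]
    omega
  · -- c = 1, c' = 1
    have hmod' : (e:ℤ) ∣ ((b':ℤ) - a') - ((b:ℤ) - a) := by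
      have heq : ((b':ℤ) - a' + s₁) - ((b:ℤ) - a + s₁) = ((b':ℤ) - a') - ((b:ℤ) - a) := by ring
      rwa [heq] at hmod0
    have key := same_comp_key hD he hγ hγ' hmod'
    simp only [chargeLT, posLT, cont, ncol, nrow, ncomp, Matrix.cons_val_zero,
      Matrix.cons_val_one, Matrix.head_cons, Fin.lt_def, Fin.ext_iff, Fin.val_zero, Fin.val_one,
      lt_self_iff_false, and_false, false_or, or_false, true_and, and_true, eq_self_iff_true]
    by_cases hc : a' < a
    · have h2 := key.mpr hc
      omega
    · have h2 : ¬ ((b:ℤ) - a < (b':ℤ) - a') := fun h => hc (key.mp h)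
      omega

end UglovPaper
end

section
/- Let (s_0,s_1)∈ℕ² with s_0 ≤ s_1 and let λ be a bipartition of rank n whose s-symbol S_s(λ) is standard. Then the greedy construction of θ is well defined: for each p = m+s_0, m+s_0−1, …, 1, there exists an entry of the top row β^(1) not chosen at an earlier step that is ≤ β^(0)_p. Consequently θ is an injective map from the entries of β^(0) to the entries of β^(1) satisfying θ(β^(0)_j) ≤ β^(0)_j for all 1≤j≤m+s_0. -/
open Finset

namespace UglovPaper

private lemma max_unbot'_mem {F : Finset ℕ} (h : F.Nonempty) : WithBot.unbotD 0 F.max ∈ F := by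
  obtain ⟨a, ha⟩ := Finset.max_of_nonempty h
  rw [ha, WithBot.unbotD_coe]
  exact Finset.mem_of_max ha

private lemma part_anti {D : Finset Node} (hD : IsDiagram D) (c : Fin 2) {a b : ℕ}
    (ha : 1 ≤ a) (hab : a ≤ b) : part D c b ≤ part D c a := by
  induction b, hab using Nat.le_induction with
  | base => exact le_rfl
  | succ b hb ih =>
    refine le_trans ?_ ih
    unfold part
    apply Finset.card_le_card_of_injOn (fun γ => (b, γ.2.1, γ.2.2))
    · intro γ hγ
      simp only [Finset.mem_coe, Finset.mem_filter] at hγ ⊢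
      obtain ⟨hγD, hrow, hcomp⟩ := hγ
      refine ⟨?_, rfl, hcomp⟩
      have hb2 : nrow γ - 1 = b := by omega
      rw [← hb2]
      exact hD.2.2 γ hγD (by omega)
    · intro γ hγ γ' hγ' h
      simp only [Finset.mem_coe, Finset.mem_filter] at hγ hγ'
      obtain ⟨r, col, cc⟩ := γ
      obtain ⟨r', col', cc'⟩ := γ'
      have h1 : r = b + 1 := hγ.2.1
      have h1' : r' = b + 1 := hγ'.2.1
      simp only [Prod.mk.injEq] at h ⊢
      exact ⟨by omega, h.2⟩

private lemma beta_lt (s : Fin 2 → ℕ) (m : ℕ) {D : Finset Node} (hD : IsDiagram D)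
    (c : Fin 2) {j j' : ℕ} (hj : 1 ≤ j) (h : j < j') (hj' : j' ≤ m + s c) :
    beta s m D c j' < beta s m D c j := by
  have hp := part_anti hD c hj (le_of_lt h)
  unfold beta
  omega

private def elt (s : Fin 2 → ℕ) (m : ℕ) (D : Finset Node) (k : ℕ) : ℕ :=
  WithBot.unbotD 0 ((((Finset.Icc 1 (m + s 1)).image (beta s m D 1)).filter
      (fun y => y ∉ thetaList s m D k ∧ y ≤ beta s m D 0 (m + s 0 - k))).max)

private lemma thetaList_succ (s : Fin 2 → ℕ) (m : ℕ) (D : Finset Node) (k : ℕ) :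
    thetaList s m D (k + 1) = thetaList s m D k ++ [elt s m D k] := rfl

private lemma thetaList_length (s : Fin 2 → ℕ) (m : ℕ) (D : Finset Node) :
    ∀ k, (thetaList s m D k).length = k
  | 0 => rfl
  | k + 1 => by
    rw [thetaList_succ, List.length_append, thetaList_length s m D k]
    rfl

private lemma thetaList_prefix (s : Fin 2 → ℕ) (m : ℕ) (D : Finset Node) {k K : ℕ}
    (h : k ≤ K) : thetaList s m D k <+: thetaList s m D K := by
  induction K, h using Nat.le_induction with
  | base => exact List.prefix_rfl
  | succ K hK ih =>
    refine ih.trans ?_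
    rw [thetaList_succ]
    exact List.prefix_append _ _

private lemma thetaList_getD (s : Fin 2 → ℕ) (m : ℕ) (D : Finset Node) {k K : ℕ}
    (h : k < K) : (thetaList s m D K).getD k 0 = elt s m D k := by
  have hlen : k < (thetaList s m D K).length := by rw [thetaList_length]; exact h
  have hpre : thetaList s m D (k + 1) <+: thetaList s m D K := thetaList_prefix s m D h
  rw [List.getD_eq_getElem _ _ hlen,
    ← hpre.getElem (i := k) (by rw [thetaList_length]; omega)]
  rw [List.getElem_of_eq (thetaList_succ s m D k)]
  exact List.getElem_concat_length (by rw [thetaList_length]) _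

private lemma filter_nonempty_of_std (s : Fin 2 → ℕ) (m : ℕ) (D : Finset Node)
    (hD : IsDiagram D) (hs : s 0 ≤ s 1)
    (hstd : ∀ i : ℕ, 1 ≤ i → part D 1 (i + (s 1 - s 0)) ≤ part D 0 i)
    {k : ℕ} (hk : k < m + s 0) :
    (((Finset.Icc 1 (m + s 1)).image (beta s m D 1)).filter
        (fun y => y ∉ thetaList s m D k ∧ y ≤ beta s m D 0 (m + s 0 - k))).Nonempty := by
  set p := m + s 0 - k with hp
  have hp1 : 1 ≤ p := by omega
  set d := s 1 - s 0 with hd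
  by_contra hne
  rw [Finset.not_nonempty_iff_eq_empty, Finset.eq_empty_iff_forall_notMem] at hne
  set S := (Finset.Icc (p + d) (m + s 1)).image (beta s m D 1) with hS
  have key : ∀ j, p + d ≤ j → j ≤ m + s 1 → beta s m D 1 j ≤ beta s m D 0 p := by
    intro j h1 h2
    have h3 : beta s m D 1 j ≤ beta s m D 1 (p + d) := by
      rcases eq_or_lt_of_le h1 with h | h
      · rw [h]
      · exact le_of_lt (beta_lt s m hD 1 (by omega) h h2)
    refine h3.trans ?_
    have h4 := hstd p hp1
    unfold beta
    omega
  have hsub : S ⊆ (thetaList s m D k).toFinset := by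
    intro y hy
    rw [hS, Finset.mem_image] at hy
    obtain ⟨j, hj, rfl⟩ := hy
    rw [Finset.mem_Icc] at hj
    have hmemT : beta s m D 1 j ∈ (Finset.Icc 1 (m + s 1)).image (beta s m D 1) :=
      Finset.mem_image_of_mem _ (Finset.mem_Icc.mpr ⟨by omega, hj.2⟩)
    have hnm := hne (beta s m D 1 j)
    rw [Finset.mem_filter] at hnm
    push_neg at hnm
    have h5 := key j hj.1 hj.2
    rw [List.mem_toFinset]
    by_contra hc
    exact absurd (hnm hmemT hc) (not_lt.mpr h5)
  have hScard : S.card = k + 1 := by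
    rw [hS, Finset.card_image_of_injOn, Nat.card_Icc]
    · omega
    · intro a ha b hb hab
      rw [Finset.mem_coe, Finset.mem_Icc] at ha hb
      by_contra hne2
      rcases lt_or_gt_of_ne hne2 with h | h
      · exact (beta_lt s m hD 1 (by omega) h hb.2).ne' hab
      · exact (beta_lt s m hD 1 (by omega) h ha.2).ne hab
  have hcard2 : S.card ≤ k :=
    le_trans (Finset.card_le_card hsub)
      (le_trans (List.toFinset_card_le _) (le_of_eq (thetaList_length s m D k)))
  omega

private lemma elt_mem (s : Fin 2 → ℕ) (m : ℕ) (D : Finset Node)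
    (hD : IsDiagram D) (hs : s 0 ≤ s 1)
    (hstd : ∀ i : ℕ, 1 ≤ i → part D 1 (i + (s 1 - s 0)) ≤ part D 0 i)
    {k : ℕ} (hk : k < m + s 0) :
    elt s m D k ∈ ((Finset.Icc 1 (m + s 1)).image (beta s m D 1)).filter
      (fun y => y ∉ thetaList s m D k ∧ y ≤ beta s m D 0 (m + s 0 - k)) :=
  max_unbot'_mem (filter_nonempty_of_std s m D hD hs hstd hk)

private lemma thetaList_nodup (s : Fin 2 → ℕ) (m : ℕ) (D : Finset Node)
    (hD : IsDiagram D) (hs : s 0 ≤ s 1)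
    (hstd : ∀ i : ℕ, 1 ≤ i → part D 1 (i + (s 1 - s 0)) ≤ part D 0 i)
    {K : ℕ} (hK : K ≤ m + s 0) : (thetaList s m D K).Nodup := by
  induction K with
  | zero => exact List.nodup_nil
  | succ k ih =>
    rw [thetaList_succ]
    have hmem := elt_mem s m D hD hs hstd (k := k) (by omega)
    rw [Finset.mem_filter] at hmem
    have hnotmem : elt s m D k ∉ thetaList s m D k := hmem.2.1
    rw [List.nodup_append]
    refine ⟨ih (by omega), List.nodup_singleton _, fun a ha b hb => ?_⟩
    rw [List.mem_singleton] at hb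
    subst hb
    rintro rfl
    exact hnotmem ha

/-- for a bipartition with standard `s`-symbol the greedy construction of
`θ` never gets stuck, and `θ` is an injection from the bottom-row entries to the top-row
entries with `θ(β⁽⁰⁾_p) ≤ β⁽⁰⁾_p`. -/
theorem theta_well_defined (s : Fin 2 → ℕ) (hs : s 0 ≤ s 1) (m n : ℕ)
    (D : Finset Node) (hD : IsDiagram D) (hcard : D.card = n)
    (hm : ∀ c : Fin 2, part D c (m + s c) = 0)
    (hstd : ∀ i : ℕ, 1 ≤ i → part D 1 (i + (s 1 - s 0)) ≤ part D 0 i) :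
    (∀ k : ℕ, k < m + s 0 →
      (((Finset.Icc 1 (m + s 1)).image (beta s m D 1)).filter
        (fun y => y ∉ thetaList s m D k ∧ y ≤ beta s m D 0 (m + s 0 - k))).Nonempty) ∧
    (∀ p : ℕ, 1 ≤ p → p ≤ m + s 0 →
      theta s m D p ∈ (Finset.Icc 1 (m + s 1)).image (beta s m D 1) ∧
      theta s m D p ≤ beta s m D 0 p) ∧
    Set.InjOn (theta s m D) (Set.Icc 1 (m + s 0)) := by
  refine ⟨fun k hk => filter_nonempty_of_std s m D hD hs hstd hk, ?_, ?_⟩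
  · intro p hp1 hp2
    have hk : m + s 0 - p < m + s 0 := by omega
    have hgd : theta s m D p = elt s m D (m + s 0 - p) := thetaList_getD s m D hk
    have hmem := elt_mem s m D hD hs hstd hk
    rw [Finset.mem_filter] at hmem
    have hpe : m + s 0 - (m + s 0 - p) = p := by omega
    have h2 := hmem.2.2
    rw [hpe] at h2
    rw [hgd]
    exact ⟨hmem.1, h2⟩
  · intro p hp q hq hpq
    simp only [Set.mem_Icc] at hp hq
    have hnd := thetaList_nodup s m D hD hs hstd (le_refl (m + s 0))
    have hi : m + s 0 - p < (thetaList s m D (m + s 0)).length := by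
      rw [thetaList_length]; omega
    have hj : m + s 0 - q < (thetaList s m D (m + s 0)).length := by
      rw [thetaList_length]; omega
    unfold theta at hpq
    rw [List.getD_eq_getElem _ _ hi, List.getD_eq_getElem _ _ hj] at hpq
    have := (hnd.getElem_inj_iff).mp hpq
    omega

end UglovPaper
end
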